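/- Let f be a topological flow on a closed topological n-manifold M and let p be a topologically hyperbolic fixed point of f of index λ_p. Then there exists an injective continuous map J : ℝ^{λ_p} → M such that J(ℝ^{λ_p}) = W^u_p and J is an immersion: every point x ∈ ℝ^{λ_p} has a neighborhood U_x such that the restriction of J to U_x is a homeomorphism onto its image (with the subspace topology from M). -/

import Mathlib

open Filter Topology Set

/-- The model linear flow `a^t_λ` on `ℝ^n`. -/
noncomputable def modelFlow (n lam : ℕ) (t : ℝ) (x : Fin n → ℝ) : Fin n → ℝ :=
  fun i => if (i : ℕ) < lam then (2 : ℝ) ^ t * x i else (2 : ℝ) ^ (-t) * x i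

/-- An `ε`-chain of length `T` from `x` to `y` for the flow `f`. -/
def IsEpsChain {M : Type*} [MetricSpace M] (f : ℝ → M → M) (ε T : ℝ) (x y : M) : Prop :=
  ∃ (m : ℕ) (xs : ℕ → M) (ts : ℕ → ℝ), 0 < m ∧ xs 0 = x ∧ xs m = y ∧
    (∀ i ∈ Finset.Icc 1 m, 1 ≤ ts i ∧ dist (f (ts i) (xs (i - 1))) (xs i) < ε) ∧
    ∑ i ∈ Finset.Icc 1 m, ts i = T

/-- A point is chain recurrent if for every `ε > 0` there is an `ε`-chain of some
length `T` from the point to itself. -/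
def IsChainRecurrent {M : Type*} [MetricSpace M] (f : ℝ → M → M) (x : M) : Prop :=
  ∀ ε > 0, ∃ T > 0, IsEpsChain f ε T x x

/-- The stable manifold `W^s_p`. -/
def stableSet {M : Type*} [TopologicalSpace M] (f : ℝ → M → M) (p : M) : Set M :=
  {y | Tendsto (fun t : ℝ => f t y) atTop (nhds p)}

/-- The unstable manifold `W^u_p`. -/
def unstableSet {M : Type*} [TopologicalSpace M] (f : ℝ → M → M) (p : M) : Set M :=
  {y | Tendsto (fun t : ℝ => f (-t) y) atTop (nhds p)}

/-- `p` is a topologically hyperbolic fixed point of index `lam` of the flow `f`. -/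
def IsTopHyperbolicFixedPt {M : Type*} [TopologicalSpace M] (n : ℕ) (f : ℝ → M → M)
    (p : M) (lam : ℕ) : Prop :=
  lam ≤ n ∧ (∀ t : ℝ, f t p = p) ∧
  ∃ (U : Set M) (_ : IsOpen U) (hp : p ∈ U) (h : U ≃ₜ (Fin n → ℝ)),
    h ⟨p, hp⟩ = 0 ∧
    ∀ (t : ℝ) (y : M) (hy : y ∈ U) (hfy : ∀ s ∈ Set.uIcc (0 : ℝ) t, f s y ∈ U),
      (h ⟨f t y, hfy t Set.right_mem_uIcc⟩ : Fin n → ℝ) = modelFlow n lam t (h ⟨y, hy⟩)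

/-- `p` is a regular point of `φ` (in the sense of continuous Morse theory). -/
def IsRegularPoint {M : Type*} [TopologicalSpace M] (n : ℕ) (φ : M → ℝ) (p : M) : Prop :=
  ∃ (V : Set M) (_ : IsOpen V) (hp : p ∈ V) (ψ : V ≃ₜ (Fin n → ℝ)) (j : Fin n),
    (j : ℕ) + 1 = n ∧ ψ ⟨p, hp⟩ = 0 ∧ ∀ y : V, φ y = φ p + ψ y j

/-- `p` is a non-degenerate critical point of `φ` of index `ν`. -/
def IsNondegenerateCriticalPoint {M : Type*} [TopologicalSpace M] (n : ℕ) (φ : M → ℝ)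
    (p : M) (ν : ℕ) : Prop :=
  ν ≤ n ∧ ¬ IsRegularPoint n φ p ∧
  ∃ (V : Set M) (_ : IsOpen V) (hp : p ∈ V) (ψ : V ≃ₜ (Fin n → ℝ)),
    ψ ⟨p, hp⟩ = 0 ∧
    ∀ y : V, φ y = φ p
      - ∑ i ∈ Finset.univ.filter (fun i : Fin n => (i : ℕ) < ν), (ψ y i) ^ 2
      + ∑ i ∈ Finset.univ.filter (fun i : Fin n => ν ≤ (i : ℕ)), (ψ y i) ^ 2

/-- `M` is locally Euclidean of dimension `n` (every point has a neighborhood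
homeomorphic to `ℝ^n`). -/
def LocallyEuclidean (n : ℕ) (M : Type*) [TopologicalSpace M] : Prop :=
  ∀ p : M, ∃ U : Set M, IsOpen U ∧ p ∈ U ∧ Nonempty (U ≃ₜ (Fin n → ℝ))

lemma continuous_two_rpow : Continuous fun t : ℝ => (2:ℝ) ^ t := by
  have : (fun t : ℝ => (2:ℝ)^t) = fun t => Real.exp (Real.log 2 * t) :=
    funext fun t => Real.rpow_def_of_pos two_pos t
  rw [this]
  exact Real.continuous_exp.comp (continuous_const.mul continuous_id)

lemma modelFlow_continuous (n lam : ℕ) (x : Fin n → ℝ) :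
    Continuous fun t => modelFlow n lam t x := by
  apply continuous_pi
  intro i
  by_cases hi : (i : ℕ) < lam <;> simp only [modelFlow, hi, if_true, if_false]
  · exact continuous_two_rpow.mul continuous_const
  · exact (continuous_two_rpow.comp continuous_neg).mul continuous_const

lemma tendsto_two_rpow_neg : Tendsto (fun t : ℝ => (2:ℝ) ^ (-t)) atTop (𝓝 0) :=
  (tendsto_rpow_atBot_of_base_gt_one 2 one_lt_two).comp tendsto_neg_atTop_atBot

lemma flow_in_chart {M : Type*} [MetricSpace M] (n lam : ℕ)
    (f : ℝ → M → M)
    (hf_cont : Continuous fun q : ℝ × M => f q.1 q.2)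
    (hf_zero : ∀ x, f 0 x = x)
    (U : Set M) (hUo : IsOpen U) (h : U ≃ₜ (Fin n → ℝ))
    (hconj : ∀ (t : ℝ) (y : M) (hy : y ∈ U) (hfy : ∀ s ∈ Set.uIcc (0 : ℝ) t, f s y ∈ U),
      (h ⟨f t y, hfy t Set.right_mem_uIcc⟩ : Fin n → ℝ) = modelFlow n lam t (h ⟨y, hy⟩))
    (y : M) (hy : y ∈ U) (t : ℝ) :
    f t y = ((h.symm (modelFlow n lam t (h ⟨y, hy⟩))) : M) := by
  set z : Fin n → ℝ := h ⟨y, hy⟩ with hz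
  set S : Set ℝ := {t | ∀ s ∈ Set.uIcc (0:ℝ) t, f s y ∈ U} with hS
  have key : ∀ t ∈ S, f t y = ((h.symm (modelFlow n lam t z)) : M) := by
    intro t ht
    have h1 := hconj t y hy ht
    have h2 : (⟨f t y, ht t Set.right_mem_uIcc⟩ : U) = h.symm (modelFlow n lam t z) := by
      rw [← h1, Homeomorph.symm_apply_apply]
    exact congrArg Subtype.val h2
  have hSmem : ∀ t ∈ S, ∀ s ∈ Set.uIcc (0:ℝ) t, s ∈ S := by
    intro t ht s hs s' hs'
    exact ht s' (Set.uIcc_subset_uIcc Set.left_mem_uIcc hs hs')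
  have h0 : (0:ℝ) ∈ S := by
    intro s hs
    rw [Set.uIcc_self, Set.mem_singleton_iff] at hs
    rw [hs, hf_zero]; exact hy
  have hg_cont : Continuous fun s : ℝ => ((h.symm (modelFlow n lam s z)) : M) :=
    continuous_subtype_val.comp (h.symm.continuous.comp (modelFlow_continuous n lam z))
  have hopen : IsOpen S := by
    rw [Metric.isOpen_iff]
    intro t ht
    have hVo : IsOpen ((fun s : ℝ => f s y) ⁻¹' U) :=
      hUo.preimage (hf_cont.comp (continuous_id.prodMk continuous_const))
    have hKV : Set.uIcc (0:ℝ) t ⊆ (fun s : ℝ => f s y) ⁻¹' U := ht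
    obtain ⟨ε, hε, hth⟩ := isCompact_uIcc.exists_thickening_subset_open hVo hKV
    refine ⟨ε, hε, fun t' ht' => ?_⟩
    intro s hs
    rcases Set.uIcc_subset_uIcc_union_uIcc (b := t) hs with hs1 | hs2
    · exact ht s hs1
    · apply hth
      rw [Metric.mem_thickening_iff]
      refine ⟨t, Set.right_mem_uIcc, ?_⟩
      have h1 : dist t s ≤ dist t t' := Real.dist_left_le_of_mem_uIcc hs2
      rw [dist_comm]
      exact lt_of_le_of_lt h1 (by rwa [Metric.mem_ball, dist_comm] at ht')
  have hclosed : IsClosed S := by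
    rw [← closure_subset_iff_isClosed]
    intro t htcl
    obtain ⟨u, hu, hlim⟩ := mem_closure_iff_seq_limit.1 htcl
    intro s hs
    have hsmm : min 0 t ≤ s ∧ s ≤ max 0 t := by
      rw [Set.uIcc, Set.mem_Icc] at hs
      exact ⟨hs.1, hs.2⟩
    set v : ℕ → ℝ := fun k => max (min s (max 0 (u k))) (min 0 (u k)) with hv
    have hvmem : ∀ k, v k ∈ Set.uIcc (0:ℝ) (u k) := by
      intro k
      rw [Set.uIcc, Set.mem_Icc]
      constructor
      · exact le_max_right _ _
      · exact max_le (le_trans (min_le_right _ _) le_rfl)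
          (le_trans (min_le_left _ _) (le_max_left _ _))
    have hvS : ∀ k, v k ∈ S := fun k => hSmem (u k) (hu k) (v k) (hvmem k)
    have hvlim : Tendsto v atTop (𝓝 s) := by
      have h1 : Tendsto v atTop (𝓝 (max (min s (max 0 t)) (min 0 t))) :=
        ((tendsto_const_nhds.min (tendsto_const_nhds.max hlim)).max
          (tendsto_const_nhds.min hlim))
      have h2 : max (min s (max 0 t)) (min 0 t) = s := by
        rw [min_eq_left hsmm.2, max_eq_left hsmm.1]
      rwa [h2] at h1
    have hl1 : Tendsto (fun k => f (v k) y) atTop (𝓝 (f s y)) := by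
      have := (hf_cont.tendsto (s, y)).comp (hvlim.prodMk_nhds tendsto_const_nhds)
      exact this
    have hl2 : Tendsto (fun k => f (v k) y) atTop
        (𝓝 ((h.symm (modelFlow n lam s z)) : M)) := by
      have h3 : (fun k => f (v k) y) = fun k => ((h.symm (modelFlow n lam (v k) z)) : M) :=
        funext fun k => key (v k) (hvS k)
      rw [h3]
      exact (hg_cont.tendsto s).comp hvlim
    have := tendsto_nhds_unique hl1 hl2
    rw [this]
    exact Subtype.coe_prop _
  have hSuniv : S = Set.univ :=
    IsClopen.eq_univ ⟨hclosed, hopen⟩ ⟨0, h0⟩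
  exact key t (hSuniv ▸ Set.mem_univ t)

/-- The unstable manifold of a topologically hyperbolic fixed point of
index `lam` is the image of an injective continuous immersion `J : ℝ^lam → M`. -/
theorem stmt17 {M : Type*} [MetricSpace M] [CompactSpace M] (n : ℕ)
    (hM : LocallyEuclidean n M)
    (f : ℝ → M → M)
    (hf_cont : Continuous fun q : ℝ × M => f q.1 q.2)
    (hf_zero : ∀ x, f 0 x = x)
    (hf_add : ∀ s t : ℝ, ∀ x, f t (f s x) = f (t + s) x)
    (p : M) (lam : ℕ) (hp : IsTopHyperbolicFixedPt n f p lam) :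
    ∃ J : (Fin lam → ℝ) → M,
      Function.Injective J ∧ Continuous J ∧ Set.range J = unstableSet f p ∧
      ∀ x : Fin lam → ℝ, ∃ Ux : Set (Fin lam → ℝ), IsOpen Ux ∧ x ∈ Ux ∧
        ∃ e : ↥Ux ≃ₜ ↥(J '' Ux), ∀ y : ↥Ux, (e y : M) = J y := by
  obtain ⟨hlam, hfix, U, hUo, hpU, h, hh0, hconj⟩ := hp
  have keyA : ∀ (y : M) (hy : y ∈ U) (t : ℝ),
      f t y = ((h.symm (modelFlow n lam t (h ⟨y, hy⟩))) : M) :=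
    flow_in_chart n lam f hf_cont hf_zero U hUo h hconj
  -- the embedding ι : ℝ^lam → ℝ^n and projection π
  set ι : (Fin lam → ℝ) → (Fin n → ℝ) :=
    fun x i => if hi : (i : ℕ) < lam then x ⟨i, hi⟩ else 0 with hι
  set π : (Fin n → ℝ) → (Fin lam → ℝ) :=
    fun z j => z (Fin.castLE hlam j) with hπ
  have hπι : Function.LeftInverse π ι := by
    intro x
    funext j
    simp only [hι, hπ]
    rw [dif_pos (by simpa using j.isLt)]
    exact congrArg x (Fin.ext rfl)
  have hι_cont : Continuous ι := by
    apply continuous_pi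
    intro i
    by_cases hi : (i : ℕ) < lam <;> simp only [hι, hi, dif_pos, dif_neg, not_false_iff]
    · exact continuous_apply _
    · exact continuous_const
  have hπ_cont : Continuous π := continuous_pi fun j => continuous_apply _
  have hι_emb : Topology.IsEmbedding ι := hπι.isEmbedding hπ_cont hι_cont
  set J : (Fin lam → ℝ) → M := fun x => ((h.symm (ι x)) : M) with hJ
  have hJ_emb : Topology.IsEmbedding J :=
    Topology.IsEmbedding.subtypeVal.comp (h.symm.isEmbedding.comp hι_emb)
  refine ⟨J, hJ_emb.injective, hJ_emb.continuous, ?_, ?_⟩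
  · -- range J = unstableSet f p
    ext y
    constructor
    · rintro ⟨x, rfl⟩
      have hyU : J x ∈ U := Subtype.coe_prop _
      have hcoord : h ⟨J x, hyU⟩ = ι x := h.apply_symm_apply (ι x)
      have hform : ∀ t : ℝ, f (-t) (J x) = ((h.symm (modelFlow n lam (-t) (ι x))) : M) := by
        intro t
        rw [keyA (J x) hyU (-t), hcoord]
      have hmf : Tendsto (fun t : ℝ => modelFlow n lam (-t) (ι x)) atTop (𝓝 0) := by
        rw [tendsto_pi_nhds]
        intro i
        by_cases hi : (i : ℕ) < lam
        · simp only [modelFlow, hi, if_true]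
          have := tendsto_two_rpow_neg.mul_const (ι x i)
          simpa using this
        · have hz : ι x i = 0 := dif_neg hi
          simp only [modelFlow, hi, if_false, hz, mul_zero]
          exact tendsto_const_nhds
      have hsymm0 : h.symm 0 = (⟨p, hpU⟩ : U) := by
        rw [← hh0, Homeomorph.symm_apply_apply]
      have : Tendsto (fun t : ℝ => ((h.symm (modelFlow n lam (-t) (ι x))) : M)) atTop (𝓝 p) := by
        have hc : Continuous fun v : Fin n → ℝ => ((h.symm v) : M) :=
          continuous_subtype_val.comp h.symm.continuous
        have := (hc.tendsto 0).comp hmf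
        rwa [hsymm0] at this
      have heq : (fun t : ℝ => f (-t) (J x)) =
          fun t : ℝ => ((h.symm (modelFlow n lam (-t) (ι x))) : M) := funext hform
      show Tendsto (fun t : ℝ => f (-t) (J x)) atTop (𝓝 p)
      rw [heq]
      exact this
    · intro hyu
      have ht : Tendsto (fun t : ℝ => f (-t) y) atTop (𝓝 p) := hyu
      obtain ⟨T, hT⟩ : ∃ T : ℝ, f (-T) y ∈ U := (ht.eventually_mem (hUo.mem_nhds hpU)).exists
      have hyU : y ∈ U := by
        have hy' : f T (f (-T) y) = y := by
          rw [hf_add, add_neg_cancel, hf_zero]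
        have h1 := keyA (f (-T) y) hT T
        rw [hy'] at h1
        rw [h1]
        exact Subtype.coe_prop _
      set z : Fin n → ℝ := h ⟨y, hyU⟩ with hzdef
      have hform : ∀ t : ℝ, f (-t) y = ((h.symm (modelFlow n lam (-t) z)) : M) :=
        fun t => keyA y hyU (-t)
      have hmf : Tendsto (fun t : ℝ => modelFlow n lam (-t) z) atTop (𝓝 0) := by
        have h1 : Tendsto (fun t : ℝ => h.symm (modelFlow n lam (-t) z)) atTop
            (𝓝 (⟨p, hpU⟩ : U)) := by
          rw [tendsto_subtype_rng]
          have heq : (fun t : ℝ => ((h.symm (modelFlow n lam (-t) z)) : M)) =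
              fun t : ℝ => f (-t) y := funext fun t => (hform t).symm
          rw [heq]
          exact ht
        have h2 := (h.continuous.tendsto _).comp h1
        simp only [Function.comp_def, Homeomorph.apply_symm_apply, hh0] at h2
        exact h2
      have hz0 : ∀ i : Fin n, lam ≤ (i : ℕ) → z i = 0 := by
        intro i hi
        have hcomp : Tendsto (fun t : ℝ => (2:ℝ) ^ t * z i) atTop (𝓝 0) := by
          have h1 := (tendsto_pi_nhds.1 hmf) i
          have h2 : (fun t : ℝ => modelFlow n lam (-t) z i) =
              fun t : ℝ => (2:ℝ) ^ t * z i := by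
            funext t
            simp [modelFlow, not_lt.2 hi]
          rw [h2] at h1
          simpa using h1
        have h3 : Tendsto (fun t : ℝ => (2:ℝ) ^ (-t) * ((2:ℝ) ^ t * z i)) atTop
            (𝓝 (0 * 0)) := tendsto_two_rpow_neg.mul hcomp
        have h4 : (fun t : ℝ => (2:ℝ) ^ (-t) * ((2:ℝ) ^ t * z i)) = fun _ => z i := by
          funext t
          rw [← mul_assoc, ← Real.rpow_add two_pos, neg_add_cancel, Real.rpow_zero, one_mul]
        rw [h4, zero_mul] at h3
        exact tendsto_nhds_unique tendsto_const_nhds h3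
      refine ⟨π z, ?_⟩
      have hιπ : ι (π z) = z := by
        funext i
        by_cases hi : (i : ℕ) < lam
        · simp only [hι, hπ, dif_pos hi]
          exact congrArg z (Fin.ext rfl)
        · simp only [hι, hπ, dif_neg hi]
          exact (hz0 i (not_lt.1 hi)).symm
      show ((h.symm (ι (π z))) : M) = y
      rw [hιπ, hzdef, Homeomorph.symm_apply_apply]
  · -- immersion clause
    intro x
    refine ⟨Set.univ, isOpen_univ, Set.mem_univ x, ?_⟩
    refine ⟨(Homeomorph.Set.univ _).trans ((hJ_emb.toHomeomorph).trans
      (Homeomorph.setCongr (by rw [Set.image_univ]))), ?_⟩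
    intro y
    rfl
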